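/- For every subset F ⊆ E, 1 − ∏_{e∈F}(1 − (1−γ)·p(e)) ≥ (1−γ)·(1 − ∏_{e∈F}(1 − p(e))). In words: scaling all existence probabilities down by a factor (1−γ) decreases the probability that at least one element of F exists by at most a factor (1−γ). -/

import Mathlib

private lemma scaled_aux {α : Type*} (p : α → ℝ) (γ : ℝ) (hγ : 0 ≤ γ ∧ γ ≤ 1)
    (F : Finset α) (hp : ∀ e ∈ F, 0 ≤ p e ∧ p e ≤ 1) :
    1 - ∏ e ∈ F, (1 - (1 - γ) * p e) ≥ (1 - γ) * (1 - ∏ e ∈ F, (1 - p e)) := by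
  classical
  induction F using Finset.induction_on with
  | empty => simp
  | insert x s hx ih =>
    have hpx := hp x (Finset.mem_insert_self x s)
    have hps : ∀ e ∈ s, 0 ≤ p e ∧ p e ≤ 1 := fun e he =>
      hp e (Finset.mem_insert_of_mem he)
    have IH := ih hps
    rw [Finset.prod_insert hx, Finset.prod_insert hx]
    set a := ∏ e ∈ s, (1 - (1 - γ) * p e) with ha
    set b := ∏ e ∈ s, (1 - p e) with hb
    have ha1 : a ≤ 1 := by
      apply Finset.prod_le_one
      · intro e he
        have := hps e he
        nlinarith [this.1, this.2, hγ.1, hγ.2]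
      · intro e he
        have := hps e he
        nlinarith [this.1, this.2, hγ.1, hγ.2]
    have hba : b ≤ a := by
      apply Finset.prod_le_prod
      · intro e he
        have := hps e he
        nlinarith [this.1, this.2]
      · intro e he
        have := hps e he
        nlinarith [this.1, this.2, hγ.1, hγ.2]
    -- key algebra
    nlinarith [hpx.1, hpx.2, hγ.1, hγ.2, mul_nonneg hγ.1 (sub_nonneg.2 ha1),
      mul_nonneg (mul_nonneg (sub_nonneg.2 hγ.2) (sub_nonneg.2 hpx.2)) (sub_nonneg.2 hba)]

/-- Scaling all existence probabilities down by a factor `(1 - γ)` decreases the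
probability that at least one element of `F` exists by at most a factor `(1 - γ)`:
`1 − ∏_{e∈F}(1 − (1−γ)·p e) ≥ (1−γ)·(1 − ∏_{e∈F}(1 − p e))`. -/
theorem scaled_probability_lower_bound
    {α : Type*} (E : Finset α) (p : α → ℝ)
    (hp : ∀ e ∈ E, 0 ≤ p e ∧ p e ≤ 1)
    (γ : ℝ) (hγ : 0 ≤ γ ∧ γ ≤ 1) :
    ∀ F ⊆ E,
      1 - ∏ e ∈ F, (1 - (1 - γ) * p e) ≥ (1 - γ) * (1 - ∏ e ∈ F, (1 - p e)) := by
  intro F hF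
  exact scaled_aux p γ hγ F (fun e he => hp e (hF he))
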